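/- Let U, S ∈ B(F_m) be the operators determined by Uζ = ζ, U e_{(i_1,…,i_n)} = e_{(i_1+1,…,i_n+1)}, and Sζ = ζ, S e_{(i_1,…,i_n)} = e_{(i_1,…,i_{n−1},i_n+1)} for all n ≥ 1 and i_1 < ⋯ < i_n. Then S is a proper isometry (S*S = I but SS* < I; in particular e_{(1,2)} is not in the range of S), S commutes with U, and consequently the stationary von Neumann algebra {T ∈ B(F_m) : UTU* = T} is noncommutative. -/

import Mathlib

noncomputable section

variable {H : Type*} [NormedAddCommGroup H] [InnerProductSpace ℂ H] [CompleteSpace H]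

/-- The shift map on finite subsets of `ℤ`: replace the maximum `m` by `m + 1`. -/
def sh (A : Finset ℤ) : Finset ℤ :=
  if h : A.Nonempty then insert (A.max' h + 1) (A.erase (A.max' h)) else ∅

lemma sh_of_nonempty {A : Finset ℤ} (h : A.Nonempty) :
    sh A = insert (A.max' h + 1) (A.erase (A.max' h)) := dif_pos h

lemma sh_empty : sh ∅ = ∅ := rfl

lemma sh_nonempty {A : Finset ℤ} (h : A.Nonempty) : (sh A).Nonempty := by
  rw [sh_of_nonempty h]; exact Finset.insert_nonempty _ _

lemma max_not_mem_erase {A : Finset ℤ} (h : A.Nonempty) :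
    A.max' h + 1 ∉ A.erase (A.max' h) := by
  intro hm
  have := Finset.le_max' A _ (Finset.mem_of_mem_erase hm)
  omega

lemma sh_max' {A : Finset ℤ} (h : A.Nonempty) :
    (sh A).max' (sh_nonempty h) = A.max' h + 1 := by
  apply le_antisymm
  · apply Finset.max'_le
    intro y hy
    rw [sh_of_nonempty h, Finset.mem_insert] at hy
    rcases hy with rfl | hy
    · exact le_rfl
    · have := Finset.le_max' A y (Finset.mem_of_mem_erase hy); omega
  · exact Finset.le_max' _ _ (by rw [sh_of_nonempty h]; exact Finset.mem_insert_self _ _)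

lemma sh_recover {A : Finset ℤ} (h : A.Nonempty) :
    insert ((sh A).max' (sh_nonempty h) - 1) ((sh A).erase ((sh A).max' (sh_nonempty h))) = A := by
  rw [sh_max' h, sh_of_nonempty h, Finset.erase_insert (max_not_mem_erase h)]
  have : A.max' h + 1 - 1 = A.max' h := by ring
  rw [this, Finset.insert_erase (A.max'_mem h)]

/-- Inverse operation of `sh`. -/
def unsh (B : Finset ℤ) : Finset ℤ :=
  if h : B.Nonempty then insert (B.max' h - 1) (B.erase (B.max' h)) else ∅

lemma unsh_sh {A : Finset ℤ} (h : A.Nonempty) : unsh (sh A) = A := by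
  rw [unsh, dif_pos (sh_nonempty h)]
  exact sh_recover h

lemma sh_inj : Function.Injective sh := by
  intro A B hAB
  by_cases hA : A.Nonempty
  · by_cases hB : B.Nonempty
    · rw [← unsh_sh hA, ← unsh_sh hB, hAB]
    · rw [Finset.not_nonempty_iff_eq_empty] at hB
      subst hB
      rw [sh_empty] at hAB
      exact absurd hAB (Finset.nonempty_iff_ne_empty.mp (sh_nonempty hA))
  · rw [Finset.not_nonempty_iff_eq_empty] at hA
    subst hA
    by_cases hB : B.Nonempty
    · rw [sh_empty] at hAB
      exact absurd hAB.symm (Finset.nonempty_iff_ne_empty.mp (sh_nonempty hB))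
    · rw [Finset.not_nonempty_iff_eq_empty] at hB; rw [hB]

lemma sh_ne_12 (A : Finset ℤ) : sh A ≠ ({1, 2} : Finset ℤ) := by
  intro h
  by_cases hA : A.Nonempty
  · set m := A.max' hA with hm
    rw [sh_of_nonempty hA] at h
    have h1 : (1 : ℤ) ∈ insert (m + 1) (A.erase m) := by rw [h]; simp
    have h2 : (2 : ℤ) ∈ insert (m + 1) (A.erase m) := by rw [h]; simp
    have h3 : m + 1 ∈ ({1, 2} : Finset ℤ) := by
      rw [← h]; exact Finset.mem_insert_self _ _
    have h3' : m + 1 = 1 ∨ m + 1 = 2 := by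
      rw [Finset.mem_insert, Finset.mem_singleton] at h3; exact h3
    rw [Finset.mem_insert] at h1 h2
    rcases h1 with h1 | h1
    · rcases h2 with h2 | h2
      · omega
      · have := Finset.le_max' A 2 (Finset.mem_of_mem_erase h2); omega
    · have hne1 := Finset.ne_of_mem_erase h1
      have hle1 := Finset.le_max' A 1 (Finset.mem_of_mem_erase h1)
      rcases h2 with h2 | h2
      · omega
      · have hne2 := Finset.ne_of_mem_erase h2
        have hle2 := Finset.le_max' A 2 (Finset.mem_of_mem_erase h2)
        omega
  · rw [Finset.not_nonempty_iff_eq_empty] at hA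
    subst hA
    rw [sh_empty] at h
    exact absurd h.symm (Finset.insert_ne_empty _ _)

lemma sh_comm_image (A : Finset ℤ) : sh (A.image (· + 1)) = (sh A).image (· + 1) := by
  by_cases hA : A.Nonempty
  · have hinj : Function.Injective (· + 1 : ℤ → ℤ) := fun a b => by simp
    have hA' : (A.image (· + 1)).Nonempty := hA.image _
    have hmax : (A.image (· + 1)).max' hA' = A.max' hA + 1 := by
      rw [Finset.max'_image (fun a b hab => by simpa using hab)]
    rw [sh_of_nonempty hA', sh_of_nonempty hA, hmax, Finset.image_insert]
    congr 1
    have := Finset.image_erase hinj A (A.max' hA)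
    simpa using this.symm
  · rw [Finset.not_nonempty_iff_eq_empty] at hA
    subst hA
    simp [sh_empty]

theorem stmt15 (e : Finset ℤ → H)
    -- the canonical orthonormal basis of the monotone Fock space, indexed by finite subsets
    -- of ℤ (e ∅ is the vacuum ζ)
    (he : Orthonormal ℂ e)
    (htot : (Submodule.span ℂ (Set.range e)).topologicalClosure = ⊤)
    (U S : H →L[ℂ] H)
    -- U is determined by Uζ = ζ, U e_{(i₁,…,i_n)} = e_{(i₁+1,…,i_n+1)}
    (hU : ∀ A : Finset ℤ, U (e A) = e (A.image (· + 1)))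
    -- S is determined by Sζ = ζ, S e_{(i₁,…,i_n)} = e_{(i₁,…,i_{n-1},i_n+1)}
    (hS0 : S (e ∅) = e ∅)
    (hS : ∀ (A : Finset ℤ) (h : A.Nonempty),
      S (e A) = e (insert (A.max' h + 1) (A.erase (A.max' h)))) :
    -- S is a proper isometry: S*S = I but SS* < I; e_{(1,2)} is not in the range of S
    star S * S = 1 ∧ S * star S ≠ 1 ∧ (¬ ∃ x : H, S x = e ({1, 2} : Finset ℤ)) ∧
    -- S commutes with U
    S * U = U * S ∧
    -- consequently the stationary von Neumann algebra is noncommutative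
    (∃ T₁ ∈ {T : H →L[ℂ] H | U * T * star U = T}, ∃ T₂ ∈ {T : H →L[ℂ] H | U * T * star U = T},
      T₁ * T₂ ≠ T₂ * T₁) := by
  classical
  have hdense : Dense ((Submodule.span ℂ (Set.range e) : Submodule ℂ H) : Set H) :=
    Submodule.dense_iff_topologicalClosure_eq_top.mpr htot
  have hee : ∀ A B : Finset ℤ, (inner ℂ (e A) (e B) : ℂ) = if A = B then 1 else 0 :=
    orthonormal_iff_ite.mp he
  -- two vectors with the same inner products against all basis vectors are equal
  have extv : ∀ u v : H, (∀ C : Finset ℤ, (inner ℂ (e C) u : ℂ) = inner ℂ (e C) v) → u = v := by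
    intro u v huv
    refine hdense.eq_of_inner_right ℂ ?_
    intro w hw
    rw [SetLike.mem_coe] at hw
    induction hw using Submodule.span_induction with
    | mem x hx => obtain ⟨C, rfl⟩ := hx; exact huv C
    | zero => simp
    | add x y _ _ hx hy => simp [inner_add_left, hx, hy]
    | smul c x _ hx => simp [inner_smul_left, hx]
  have hadj : ∀ (T : H →L[ℂ] H) (x y : H), (inner ℂ x (star T y) : ℂ) = inner ℂ (T x) y := by
    intro T x y
    rw [ContinuousLinearMap.star_eq_adjoint, ContinuousLinearMap.adjoint_inner_right]
  have hSA : ∀ A : Finset ℤ, S (e A) = e (sh A) := by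
    intro A
    by_cases h : A.Nonempty
    · rw [hS A h, sh_of_nonempty h]
    · rw [Finset.not_nonempty_iff_eq_empty] at h; subst h; rw [hS0, sh_empty]
  have hinj1 : Function.Injective (· + 1 : ℤ → ℤ) := fun a b => by simp
  -- `S* S = 1`
  have isoS : star S * S = 1 := by
    refine ContinuousLinearMap.ext_on hdense ?_
    rintro _ ⟨A, rfl⟩
    refine extv _ _ fun C => ?_
    rw [ContinuousLinearMap.mul_apply, ContinuousLinearMap.one_apply, hadj, hSA, hSA, hee, hee]
    by_cases h : C = A
    · simp [h]
    · rw [if_neg h, if_neg (fun hh => h (sh_inj hh))]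
  -- `U U* = 1`
  have hUUs : U * star U = 1 := by
    refine ContinuousLinearMap.ext_on hdense ?_
    rintro _ ⟨B, rfl⟩
    have hA : (B.image (fun x => x - 1)).image (· + 1) = B := by
      rw [Finset.image_image]
      have : ((· + 1) ∘ fun x : ℤ => x - 1) = id := by funext x; simp
      rw [this, Finset.image_id]
    have hstar : star U (e B) = e (B.image (fun x => x - 1)) := by
      refine extv _ _ fun C => ?_
      rw [hadj, hU, hee, hee]
      congr 1
      rw [eq_iff_iff]
      constructor
      · intro h
        exact Finset.image_injective hinj1 (h.trans hA.symm)
      · rintro rfl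
        exact hA
    rw [ContinuousLinearMap.mul_apply, ContinuousLinearMap.one_apply, hstar, hU, hA]
  -- `S* (e {1,2}) = 0`
  have hSstar0 : star S (e ({1, 2} : Finset ℤ)) = 0 := by
    refine extv _ _ fun C => ?_
    rw [hadj, hSA, hee, inner_zero_right, if_neg (sh_ne_12 C)]
  -- `e {1,2}` is not in the range of `S`
  have hrange : ¬ ∃ x : H, S x = e ({1, 2} : Finset ℤ) := by
    rintro ⟨x, hx⟩
    have hx0 : x = 0 := by
      calc x = (star S * S) x := by rw [isoS]; rfl
        _ = star S (S x) := rfl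
        _ = star S (e ({1, 2} : Finset ℤ)) := by rw [hx]
        _ = 0 := hSstar0
    rw [hx0, map_zero] at hx
    have h1 : ‖e ({1, 2} : Finset ℤ)‖ = 1 := he.1 _
    rw [← hx] at h1
    simp at h1
  -- `S S* ≠ 1`
  have hSSs : S * star S ≠ 1 := by
    intro h
    apply hrange
    refine ⟨star S (e ({1, 2} : Finset ℤ)), ?_⟩
    rw [← ContinuousLinearMap.mul_apply, h, ContinuousLinearMap.one_apply]
  -- `S U = U S`
  have hcomm : S * U = U * S := by
    refine ContinuousLinearMap.ext_on hdense ?_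
    rintro _ ⟨A, rfl⟩
    simp only [ContinuousLinearMap.mul_apply]
    rw [hU, hSA, hSA, hU, sh_comm_image]
  have hfix : U * S * star U = S := by
    rw [← hcomm, mul_assoc, hUUs, mul_one]
  have hfix' : U * star S * star U = star S := by
    conv_rhs => rw [← hfix]
    simp only [star_mul, star_star, mul_assoc]
  refine ⟨isoS, hSSs, hrange, hcomm, S, hfix, star S, hfix', ?_⟩
  rw [isoS]
  exact hSSs

end
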